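/- arXiv:1804.06081 — 8 statements merged into one kernel-verified Lean document; each statement's English description precedes it below -/
import Mathlib

section
/- Let w be a real n×n matrix with I − w invertible, Δ = (I − w)^{-1}, and w⁰, w_g, w_b ∈ ℝⁿ. Define r^(1) = Δᵀ𝟙 and recursively r^(q) = Δᵀ(r^(q−1) ∘ w⁰) for q ≥ 2. Given an initial vector v^(0) = v⁰ ∈ ℝⁿ and per-phase investment vectors x^(q), y^(q) ∈ ℝⁿ for q = 1,…,p, define v^(q) = Δ(w⁰ ∘ v^(q−1) + w_g ∘ x^(q) − w_b ∘ y^(q)). Then for every p ≥ 1: ∑_i v_i^(p) = ∑_i r_i^(p) w⁰_i v⁰_i + ∑_{q=1}^{p} ∑_i r_i^(p−q+1) (w_{g,i} x_i^(q) − w_{b,i} y_i^(q)). -/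
open Matrix BigOperators Finset

/-- Multiphase opinion sum: with `Δ = (I − w)⁻¹`, `q`-phase Katz centralities
`r^(1) = Δᵀ𝟙`, `r^(q) = Δᵀ(r^(q−1) ∘ w⁰)`, and steady-state phase opinions
`v^(q) = Δ(w⁰ ∘ v^(q−1) + w_g ∘ x^(q) − w_b ∘ y^(q))` starting from `v^(0) = v⁰`,
for every `p ≥ 1`:
`∑ᵢ vᵢ^(p) = ∑ᵢ rᵢ^(p) w⁰ᵢ v⁰ᵢ + ∑_{q=1}^p ∑ᵢ rᵢ^(p−q+1) (w_{g,i} xᵢ^(q) − w_{b,i} yᵢ^(q))`. -/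
theorem multiphase_opinion_sum (n : ℕ) (w Δ : Matrix (Fin n) (Fin n) ℝ)
    (hinv : IsUnit (1 - w)) (hΔ : Δ = (1 - w)⁻¹)
    (w0 wg wb v0 : Fin n → ℝ)
    (x y : ℕ → Fin n → ℝ)
    (r : ℕ → Fin n → ℝ)
    (hr1 : ∀ i, r 1 i = ∑ j, Δ j i)
    (hrq : ∀ q : ℕ, 1 ≤ q → ∀ i, r (q + 1) i = ∑ j, r q j * w0 j * Δ j i)
    (v : ℕ → Fin n → ℝ)
    (hv0 : v 0 = v0)
    (hv : ∀ q : ℕ, v (q + 1) =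
      Δ.mulVec (fun i => w0 i * v q i + wg i * x (q + 1) i - wb i * y (q + 1) i)) :
    ∀ p : ℕ, 1 ≤ p →
      ∑ i, v p i = ∑ i, r p i * w0 i * v0 i +
        ∑ q ∈ Finset.Icc 1 p, ∑ i, r (p - q + 1) i * (wg i * x q i - wb i * y q i) := by
  -- key one-step identity
  have key : ∀ q m : ℕ, 1 ≤ q →
      ∑ i, r q i * w0 i * v (m + 1) i
        = ∑ i, r (q + 1) i * w0 i * v m i
          + ∑ i, r (q + 1) i * (wg i * x (m + 1) i - wb i * y (m + 1) i) := by
    intro q m hq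
    rw [hv m]
    simp only [mulVec, dotProduct]
    simp_rw [Finset.mul_sum]
    rw [Finset.sum_comm, ← Finset.sum_add_distrib]
    refine Finset.sum_congr rfl fun j _ => ?_
    rw [hrq q hq j, Finset.sum_mul, Finset.sum_mul, Finset.sum_mul, ← Finset.sum_add_distrib]
    refine Finset.sum_congr rfl fun i _ => ?_
    ring
  -- same identity for the outer sum (q = 0 level, using r 1)
  have key0 : ∀ m : ℕ,
      ∑ i, v (m + 1) i
        = ∑ i, r 1 i * w0 i * v m i
          + ∑ i, r 1 i * (wg i * x (m + 1) i - wb i * y (m + 1) i) := by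
    intro m
    rw [hv m]
    simp only [mulVec, dotProduct]
    rw [Finset.sum_comm, ← Finset.sum_add_distrib]
    refine Finset.sum_congr rfl fun j _ => ?_
    rw [hr1 j, Finset.sum_mul, Finset.sum_mul, Finset.sum_mul, ← Finset.sum_add_distrib]
    refine Finset.sum_congr rfl fun i _ => ?_
    ring
  -- unfolding lemma by induction on m
  have B : ∀ m : ℕ, ∀ q : ℕ, 1 ≤ q →
      ∑ i, r q i * w0 i * v m i
        = ∑ i, r (q + m) i * w0 i * v 0 i
          + ∑ s ∈ Finset.Icc 1 m, ∑ i, r (q + m - s + 1) i * (wg i * x s i - wb i * y s i) := by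
    intro m
    induction m with
    | zero => intro q hq; simp
    | succ m ih =>
      intro q hq
      rw [key q m hq, ih (q + 1) (by omega)]
      have h1 : q + 1 + m = q + (m + 1) := by omega
      have h2 : ∀ s ∈ Finset.Icc 1 m, (∑ i, r (q + 1 + m - s + 1) i * (wg i * x s i - wb i * y s i))
          = ∑ i, r (q + (m + 1) - s + 1) i * (wg i * x s i - wb i * y s i) := by
        intro s hs
        have : q + 1 + m - s + 1 = q + (m + 1) - s + 1 := by
          simp only [Finset.mem_Icc] at hs; omega
        rw [this]
      rw [h1, Finset.sum_Icc_succ_top (by omega : 1 ≤ m + 1)]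
      have h3 : q + (m + 1) - (m + 1) + 1 = q + 1 := by omega
      rw [h3]
      ring
  intro p hp
  obtain ⟨m, rfl⟩ : ∃ m, p = m + 1 := ⟨p - 1, by omega⟩
  rw [key0 m, B m 1 le_rfl, hv0]
  have h1 : 1 + m = m + 1 := by omega
  have h2 : ∀ s ∈ Finset.Icc 1 m, (∑ i, r (1 + m - s + 1) i * (wg i * x s i - wb i * y s i))
      = ∑ i, r (m + 1 - s + 1) i * (wg i * x s i - wb i * y s i) := by
    intro s hs
    have : 1 + m - s + 1 = m + 1 - s + 1 := by
      simp only [Finset.mem_Icc] at hs; omega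
    rw [this]
  rw [h1, Finset.sum_Icc_succ_top (by omega : 1 ≤ m + 1)]
  have h3 : m + 1 - (m + 1) + 1 = 1 := by omega
  rw [h3]
  ring
end

section
/- Let w be a real n×n matrix with I − w invertible, Δ = (I − w)^{-1}, r = Δᵀ𝟙, and s = Δᵀ(r ∘ w⁰) (so s_i = ∑_j r_j w⁰_j Δ_{ji}). With v^(1) = Δ(w⁰ ∘ v⁰ + w_g ∘ x^(1) − w_b ∘ y^(1)) and v^(2) = Δ(w⁰ ∘ v^(1) + w_g ∘ x^(2) − w_b ∘ y^(2)), one has ∑_i v_i^(2) = ∑_i s_i w⁰_i v⁰_i + ∑_i s_i w_{g,i} x_i^(1) − ∑_i s_i w_{b,i} y_i^(1) + ∑_i r_i w_{g,i} x_i^(2) − ∑_i r_i w_{b,i} y_i^(2). -/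
open Matrix BigOperators Finset

private lemma key_sum {n : ℕ} (Δ : Matrix (Fin n) (Fin n) ℝ) (c f : Fin n → ℝ) :
    ∑ j, c j * Δ.mulVec f j = ∑ k, (∑ j, c j * Δ j k) * f k := by
  simp only [mulVec, dotProduct, Finset.mul_sum]
  rw [Finset.sum_comm]
  refine Finset.sum_congr rfl fun k _ => ?_
  rw [Finset.sum_mul]
  exact Finset.sum_congr rfl fun j _ => (mul_assoc _ _ _).symm

/-- Two-phase opinion sum: with `Δ = (I − w)⁻¹`, `r = Δᵀ𝟙`, `s = Δᵀ(r ∘ w⁰)`, and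
phase opinions `v^(1) = Δ(w⁰ ∘ v⁰ + w_g ∘ x^(1) − w_b ∘ y^(1))`,
`v^(2) = Δ(w⁰ ∘ v^(1) + w_g ∘ x^(2) − w_b ∘ y^(2))`, one has
`∑ᵢ vᵢ^(2) = ∑ᵢ sᵢ w⁰ᵢ v⁰ᵢ + ∑ᵢ sᵢ w_{g,i} xᵢ^(1) − ∑ᵢ sᵢ w_{b,i} yᵢ^(1)
  + ∑ᵢ rᵢ w_{g,i} xᵢ^(2) − ∑ᵢ rᵢ w_{b,i} yᵢ^(2)`. -/
theorem two_phase_opinion_sum (n : ℕ) (w Δ : Matrix (Fin n) (Fin n) ℝ)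
    (hinv : IsUnit (1 - w)) (hΔ : Δ = (1 - w)⁻¹)
    (w0 wg wb v0 x1 x2 y1 y2 : Fin n → ℝ)
    (r s : Fin n → ℝ)
    (hr : ∀ i, r i = ∑ j, Δ j i)
    (hs : ∀ i, s i = ∑ j, r j * w0 j * Δ j i)
    (v1 v2 : Fin n → ℝ)
    (hv1 : v1 = Δ.mulVec (fun i => w0 i * v0 i + wg i * x1 i - wb i * y1 i))
    (hv2 : v2 = Δ.mulVec (fun i => w0 i * v1 i + wg i * x2 i - wb i * y2 i)) :
    ∑ i, v2 i = ∑ i, s i * w0 i * v0 i + ∑ i, s i * wg i * x1 i - ∑ i, s i * wb i * y1 i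
      + ∑ i, r i * wg i * x2 i - ∑ i, r i * wb i * y2 i := by
  have h2 : ∑ i, v2 i = ∑ k, r k * (w0 k * v1 k + wg k * x2 k - wb k * y2 k) := by
    rw [hv2]
    have := key_sum Δ (fun _ => 1) (fun i => w0 i * v1 i + wg i * x2 i - wb i * y2 i)
    simp only [one_mul] at this
    rw [this]
    exact Finset.sum_congr rfl fun k _ => by rw [hr k]
  have h1 : ∑ k, r k * w0 k * v1 k
      = ∑ k, s k * (w0 k * v0 k + wg k * x1 k - wb k * y1 k) := by
    rw [hv1]
    have := key_sum Δ (fun j => r j * w0 j) (fun i => w0 i * v0 i + wg i * x1 i - wb i * y1 i)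
    rw [this]
    exact Finset.sum_congr rfl fun k _ => by rw [hs k]
  rw [h2]
  simp only [mul_add, mul_sub, Finset.sum_add_distrib, Finset.sum_sub_distrib]
  have : ∑ k, r k * (w0 k * v1 k) = ∑ k, r k * w0 k * v1 k :=
    Finset.sum_congr rfl fun k _ => (mul_assoc _ _ _).symm
  rw [this, h1]
  simp only [mul_add, mul_sub, Finset.sum_add_distrib, Finset.sum_sub_distrib]
  ring_nf
end

section
/- Let s, r, w_b ∈ ℝⁿ and k_b ≥ 0, and let î ∈ argmax_i r_i w_{b,i} with r_î w_{b,î} > 0 and s_î w_{b,î} ≥ 0. The myopic bad camp invests its entire budget k_b on node î in the first phase (y^(1) = k_b e_î, y^(2) = 0), whereas the farsighted bad camp chooses (y^(1), y^(2)) ≥ 0 with ∑_i (y_i^(1) + y_i^(2)) ≤ k_b to maximize ∑_i (s_i w_{b,i} y_i^(1) + r_i w_{b,i} y_i^(2)). The loss of the myopic camp, i.e., the difference between the farsighted maximum and the value achieved by the myopic strategy, equals k_b · ( max_i max(s_i w_{b,i}, r_i w_{b,i}, 0) − max(s_î w_{b,î}, 0) ). -/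
open Matrix BigOperators Finset

/-- Loss of the myopic bad camp: the farsighted maximum of
`∑ᵢ (sᵢ w_{b,i} yᵢ^(1) + rᵢ w_{b,i} yᵢ^(2))` over nonnegative investments of total at most
`k_b` equals `k_b · maxᵢ max(sᵢ w_{b,i}, rᵢ w_{b,i}, 0)`, and its difference with the value
achieved by the myopic strategy `y^(1) = k_b e_î`, `y^(2) = 0` equals
`k_b · (maxᵢ max(sᵢ w_{b,i}, rᵢ w_{b,i}, 0) − max(s_î w_{b,î}, 0))`. -/
theorem myopic_loss (n : ℕ) (hn : 0 < n) (s r wb : Fin n → ℝ) (kb : ℝ) (hkb : 0 ≤ kb)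
    (ihat : Fin n)
    (hargmax : ∀ i, r i * wb i ≤ r ihat * wb ihat)
    (hpos : 0 < r ihat * wb ihat)
    (hs : 0 ≤ s ihat * wb ihat) :
    IsGreatest
      {val : ℝ | ∃ y1 y2 : Fin n → ℝ, (∀ i, 0 ≤ y1 i) ∧ (∀ i, 0 ≤ y2 i) ∧
        (∑ i, (y1 i + y2 i)) ≤ kb ∧
        val = ∑ i, (s i * wb i * y1 i + r i * wb i * y2 i)}
      (kb * Finset.univ.sup' ⟨⟨0, hn⟩, Finset.mem_univ _⟩
        (fun i => max (max (s i * wb i) (r i * wb i)) 0)) ∧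
    (kb * Finset.univ.sup' ⟨⟨0, hn⟩, Finset.mem_univ _⟩
        (fun i => max (max (s i * wb i) (r i * wb i)) 0))
      - (∑ i, (s i * wb i * (Pi.single ihat kb : Fin n → ℝ) i + r i * wb i * (0 : ℝ))) =
      kb * ((Finset.univ.sup' ⟨⟨0, hn⟩, Finset.mem_univ _⟩
        (fun i => max (max (s i * wb i) (r i * wb i)) 0)) - max (s ihat * wb ihat) 0) := by
  have hne : (Finset.univ : Finset (Fin n)).Nonempty := ⟨⟨0, hn⟩, Finset.mem_univ _⟩
  set f : Fin n → ℝ := fun i => max (max (s i * wb i) (r i * wb i)) 0 with hf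
  set M : ℝ := Finset.univ.sup' ⟨⟨0, hn⟩, Finset.mem_univ _⟩ f with hM
  have hM0 : 0 ≤ M := le_trans (le_max_right _ 0) (Finset.le_sup' f (Finset.mem_univ ihat))
  obtain ⟨i0, _, hi0⟩ := Finset.exists_mem_eq_sup' hne f
  -- sum of single
  have hsingle : ∀ (c : Fin n → ℝ) (j : Fin n) (a : ℝ),
      (∑ i, c i * (Pi.single j a : Fin n → ℝ) i) = c j * a := by
    intro c j a
    rw [Finset.sum_eq_single j]
    · simp
    · intro b _ hb; simp [Pi.single_apply, hb]
    · simp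
  constructor
  · constructor
    · -- membership
      have hMpos : 0 < M := lt_of_lt_of_le hpos
        (le_trans (le_max_right _ _) (le_trans (le_max_left _ 0)
          (Finset.le_sup' f (Finset.mem_univ ihat))))
      have hfM : f i0 = max (s i0 * wb i0) (r i0 * wb i0) := by
        have : (0:ℝ) < f i0 := hi0 ▸ hMpos
        simp only [hf] at this ⊢
        rcases max_cases (max (s i0 * wb i0) (r i0 * wb i0)) (0:ℝ) with ⟨h1, h2⟩ | ⟨h1, h2⟩
        · exact h1
        · exfalso; rw [h1] at this; exact lt_irrefl _ this
      rcases le_total (r i0 * wb i0) (s i0 * wb i0) with hc | hc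
      · refine ⟨Pi.single i0 kb, 0, ?_, by simp, ?_, ?_⟩
        · intro i; by_cases h : i = i0 <;> simp [Pi.single_apply, h, hkb]
        · have h := hsingle (fun _ => (1:ℝ)) i0 kb
          simp only [one_mul] at h
          calc (∑ i, ((Pi.single i0 kb : Fin n → ℝ) i + (0 : Fin n → ℝ) i))
              = ∑ i, (Pi.single i0 kb : Fin n → ℝ) i := by simp
            _ = kb := h
            _ ≤ kb := le_refl kb
        · simp only [Pi.zero_apply, mul_zero, add_zero]
          rw [hsingle (fun i => s i * wb i) i0 kb, show M = f i0 from hi0, hfM, max_eq_left hc, mul_comm]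
      · refine ⟨0, Pi.single i0 kb, by simp, ?_, ?_, ?_⟩
        · intro i; by_cases h : i = i0 <;> simp [Pi.single_apply, h, hkb]
        · have h := hsingle (fun _ => (1:ℝ)) i0 kb
          simp only [one_mul] at h
          calc (∑ i, ((0 : Fin n → ℝ) i + (Pi.single i0 kb : Fin n → ℝ) i))
              = ∑ i, (Pi.single i0 kb : Fin n → ℝ) i := by simp
            _ = kb := h
            _ ≤ kb := le_refl kb
        · simp only [Pi.zero_apply, mul_zero, zero_add]
          rw [hsingle (fun i => r i * wb i) i0 kb, show M = f i0 from hi0, hfM, max_eq_right hc, mul_comm]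
    · -- upper bound
      rintro val ⟨y1, y2, h1, h2, h3, rfl⟩
      calc ∑ i, (s i * wb i * y1 i + r i * wb i * y2 i)
          ≤ ∑ i, (M * y1 i + M * y2 i) := by
            apply Finset.sum_le_sum
            intro i _
            have hfi : f i ≤ M := Finset.le_sup' f (Finset.mem_univ i)
            have hsi : s i * wb i ≤ M :=
              le_trans (le_trans (le_max_left _ _) (le_max_left _ 0)) hfi
            have hri : r i * wb i ≤ M :=
              le_trans (le_trans (le_max_right _ _) (le_max_left _ 0)) hfi
            exact add_le_add (mul_le_mul_of_nonneg_right hsi (h1 i))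
              (mul_le_mul_of_nonneg_right hri (h2 i))
        _ = M * ∑ i, (y1 i + y2 i) := by rw [Finset.mul_sum]; congr 1; ext i; ring
        _ ≤ M * kb := mul_le_mul_of_nonneg_left h3 hM0
        _ = kb * M := mul_comm _ _
  · -- second conjunct
    have : (∑ i, (s i * wb i * (Pi.single ihat kb : Fin n → ℝ) i + r i * wb i * (0:ℝ)))
        = s ihat * wb ihat * kb := by
      simp only [Pi.zero_apply, mul_zero, add_zero]
      exact hsingle (fun i => s i * wb i) ihat kb
    rw [this, max_eq_left hs]
    ring
end

section
/- Let w be a real n×n matrix with I − w invertible, Δ = (I − w)^{-1}, r = Δᵀ𝟙, and let w⁰, θ, v⁰ ∈ ℝⁿ. Set b_{ji} = r_j w⁰_j Δ_{ji} and c_i = w⁰_i v⁰_i. Define the phase-dependent good-camp weights w_{g,i}^{(p)} = (θ_i/2)(1 + w⁰_i v_i^{(p−1)}), with v^(0) = v⁰, v^(1) = Δ(w⁰ ∘ v⁰ + w_g^{(1)} ∘ x^(1)), and v^(2) = Δ(w⁰ ∘ v^(1) + w_g^{(2)} ∘ x^(2)) (single camp, no bad-camp investment). Then ∑_i v_i^(2)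 = ∑_i ∑_j ( c_i + (θ_i/2) x_i^(1) (c_i + 1) ) · b_{ji} · ( 1 + (θ_j/2) x_j^(2) ) + ∑_j r_j (θ_j/2) x_j^(2). -/
open Matrix BigOperators Finset

/-- Single-camp two-phase objective in the dependency setting: with `Δ = (I − w)⁻¹`,
`r = Δᵀ𝟙`, `b_{ji} = r_j w⁰_j Δ_{ji}`, `c_i = w⁰_i v⁰_i`, phase-dependent weights
`w_{g,i}^{(p)} = (θᵢ/2)(1 + w⁰ᵢ vᵢ^{(p−1)})`, and phase opinions
`v^(1) = Δ(w⁰ ∘ v⁰ + w_g^{(1)} ∘ x^(1))`, `v^(2) = Δ(w⁰ ∘ v^(1) + w_g^{(2)} ∘ x^(2))`,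
one has `∑ᵢ vᵢ^(2) = ∑ᵢ∑ⱼ (cᵢ + (θᵢ/2) xᵢ^(1) (cᵢ+1)) b_{ji} (1 + (θⱼ/2) xⱼ^(2))
  + ∑ⱼ rⱼ (θⱼ/2) xⱼ^(2)`. -/
theorem dependency_single_camp_objective (n : ℕ) (w Δ : Matrix (Fin n) (Fin n) ℝ)
    (hinv : IsUnit (1 - w)) (hΔ : Δ = (1 - w)⁻¹)
    (w0 θ v0 x1 x2 : Fin n → ℝ)
    (r : Fin n → ℝ) (hr : ∀ i, r i = ∑ j, Δ j i)
    (b : Matrix (Fin n) (Fin n) ℝ) (hb : ∀ j i, b j i = r j * w0 j * Δ j i)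
    (c : Fin n → ℝ) (hc : ∀ i, c i = w0 i * v0 i)
    (v1 v2 : Fin n → ℝ)
    (hv1 : v1 = Δ.mulVec (fun i => w0 i * v0 i + (θ i / 2 * (1 + w0 i * v0 i)) * x1 i))
    (hv2 : v2 = Δ.mulVec (fun i => w0 i * v1 i + (θ i / 2 * (1 + w0 i * v1 i)) * x2 i)) :
    ∑ i, v2 i =
      (∑ i, ∑ j, (c i + θ i / 2 * x1 i * (c i + 1)) * (b j i * (1 + θ j / 2 * x2 j)))
        + ∑ j, r j * (θ j / 2) * x2 j := by
  have key : ∀ f : Fin n → ℝ, ∑ i, Δ.mulVec f i = ∑ k, r k * f k := by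
    intro f
    simp only [mulVec, dotProduct]
    rw [Finset.sum_comm]
    simp [hr, Finset.sum_mul]
  subst hv2
  rw [key]
  have hv1' : ∀ k, v1 k = ∑ j, Δ k j * (w0 j * v0 j + (θ j / 2 * (1 + w0 j * v0 j)) * x1 j) := by
    intro k; rw [hv1]; rfl
  rw [Finset.sum_comm (s := Finset.univ) (t := Finset.univ)
    (f := fun i j => (c i + θ i / 2 * x1 i * (c i + 1)) * (b j i * (1 + θ j / 2 * x2 j)))]
  rw [← Finset.sum_add_distrib]
  refine Finset.sum_congr rfl fun k _ => ?_
  rw [hv1']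
  simp only [hb, hc, Finset.mul_sum, Finset.sum_mul, mul_add, add_mul]
  rw [add_left_comm, ← Finset.sum_add_distrib, add_comm]
  congr 1
  · exact Finset.sum_congr rfl fun j _ => by ring
  · ring
end

section
/- Let b be a real n×n matrix and c, θ, r ∈ ℝⁿ, k_g ≥ 0, and define f(x^(1), x^(2)) = ∑_i ∑_j ( c_i + (θ_i/2) x_i^(1) (c_i + 1) ) · b_{ji} · ( 1 + (θ_j/2) x_j^(2) ) + ∑_j r_j (θ_j/2) x_j^(2) on the compact feasible set K = { (x^(1), x^(2)) : x^(1), x^(2) ≥ 0 componentwise, ∑_i (x_i^(1) + x_i^(2)) ≤ k_g }. Then there exists a maximizer (x^(1)*, x^(2)*) of f over K such that x^(1)* has at most one nonzero coordinate, x^(2)* has at most one nonzero coordinate, and either ∑_i (x_i^(1)* + x_i^(2)*) = k_g or x^(1)* = x^(2)* = 0. -/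
open Matrix BigOperators Finset

/-- Linear optimization over the simplex `{x ≥ 0, ∑ x ≤ B}`: there is a maximizer supported
on at most one coordinate that either exhausts the budget or is zero. -/
lemma simplex_linear_max (n : ℕ) (a : Fin n → ℝ) (B : ℝ) (hB : 0 ≤ B) :
    ∃ x : Fin n → ℝ, (∀ i, 0 ≤ x i) ∧ (∑ i, x i) ≤ B ∧
      (∀ i j, x i ≠ 0 → x j ≠ 0 → i = j) ∧ ((∑ i, x i) = B ∨ x = 0) ∧
      (∀ z : Fin n → ℝ, (∀ i, 0 ≤ z i) → (∑ i, z i) ≤ B →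
        ∑ i, a i * z i ≤ ∑ i, a i * x i) := by
  rcases Nat.eq_zero_or_pos n with hn | hn
  · subst hn
    exact ⟨0, fun i => le_rfl, by simpa using hB, fun i => i.elim0, Or.inr rfl,
      fun z _ _ => by simp⟩
  · have : Nonempty (Fin n) := ⟨⟨0, hn⟩⟩
    obtain ⟨i0, -, hi0⟩ := Finset.exists_max_image Finset.univ a
      ⟨Classical.arbitrary (Fin n), Finset.mem_univ _⟩
    by_cases ha : 0 ≤ a i0
    · refine ⟨fun j => if j = i0 then B else 0, ?_, ?_, ?_, ?_, ?_⟩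
      · intro i; dsimp only; split <;> simp [hB]
      · simp
      · intro i j hi hj
        by_cases h1 : i = i0 <;> by_cases h2 : j = i0 <;> simp_all
      · left; simp
      · intro z hz hzB
        have h1 : ∑ i, a i * z i ≤ ∑ i, a i0 * z i :=
          Finset.sum_le_sum (fun i _ => mul_le_mul_of_nonneg_right (hi0 i (mem_univ i)) (hz i))
        calc ∑ i, a i * z i ≤ a i0 * ∑ i, z i := by rw [Finset.mul_sum]; exact h1
          _ ≤ a i0 * B := mul_le_mul_of_nonneg_left hzB ha
          _ = ∑ i, a i * (if i = i0 then B else 0) := by simp [mul_ite, mul_comm]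
    · refine ⟨0, fun i => le_rfl, by simpa using hB, by simp, Or.inr rfl, ?_⟩
      intro z hz hzB
      have h : ∑ i, a i * z i ≤ 0 := Finset.sum_nonpos (fun i _ =>
        mul_nonpos_of_nonpos_of_nonneg (le_trans (hi0 i (mem_univ i)) (le_of_not_ge ha)) (hz i))
      simpa using h

/-- The bilinear objective of Lemma 1. -/
noncomputable def obj (n : ℕ) (b : Matrix (Fin n) (Fin n) ℝ) (c θ r : Fin n → ℝ)
    (z1 z2 : Fin n → ℝ) : ℝ :=
  (∑ i, ∑ j, (c i + θ i / 2 * z1 i * (c i + 1)) * (b j i * (1 + θ j / 2 * z2 j)))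
    + ∑ j, r j * (θ j / 2) * z2 j

/-- `obj` is affine in the first phase variable. -/
lemma obj_lin1 (n : ℕ) (b : Matrix (Fin n) (Fin n) ℝ) (c θ r : Fin n → ℝ)
    (z1 z2 : Fin n → ℝ) :
    obj n b c θ r z1 z2 = obj n b c θ r 0 z2
      + ∑ i, (θ i / 2 * (c i + 1) * ∑ j, b j i * (1 + θ j / 2 * z2 j)) * z1 i := by
  unfold obj
  have h : (∑ i, ∑ j, (c i + θ i / 2 * z1 i * (c i + 1)) * (b j i * (1 + θ j / 2 * z2 j)))
      = (∑ i, ∑ j, (c i + θ i / 2 * (0:Fin n → ℝ) i * (c i + 1)) * (b j i * (1 + θ j / 2 * z2 j)))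
        + ∑ i, (θ i / 2 * (c i + 1) * ∑ j, b j i * (1 + θ j / 2 * z2 j)) * z1 i := by
    rw [← Finset.sum_add_distrib]
    refine Finset.sum_congr rfl fun i _ => ?_
    rw [Finset.mul_sum, Finset.sum_mul, ← Finset.sum_add_distrib]
    refine Finset.sum_congr rfl fun j _ => ?_
    simp only [Pi.zero_apply]
    ring
  rw [h]; ring

/-- `obj` is affine in the second phase variable. -/
lemma obj_lin2 (n : ℕ) (b : Matrix (Fin n) (Fin n) ℝ) (c θ r : Fin n → ℝ)
    (z1 z2 : Fin n → ℝ) :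
    obj n b c θ r z1 z2 = obj n b c θ r z1 0
      + ∑ j, ((θ j / 2) * (∑ i, (c i + θ i / 2 * z1 i * (c i + 1)) * b j i)
          + r j * (θ j / 2)) * z2 j := by
  unfold obj
  have h : (∑ j, ∑ i, (c i + θ i / 2 * z1 i * (c i + 1)) * (b j i * (1 + θ j / 2 * z2 j)))
      = (∑ j, ∑ i, (c i + θ i / 2 * z1 i * (c i + 1)) * (b j i * (1 + θ j / 2 * (0:Fin n → ℝ) j)))
        + ∑ j, ((θ j / 2) * (∑ i, (c i + θ i / 2 * z1 i * (c i + 1)) * b j i)) * z2 j := by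
    rw [← Finset.sum_add_distrib]
    refine Finset.sum_congr rfl fun j _ => ?_
    rw [Finset.mul_sum, Finset.sum_mul, ← Finset.sum_add_distrib]
    refine Finset.sum_congr rfl fun i _ => ?_
    simp only [Pi.zero_apply]
    ring
  rw [Finset.sum_comm (s := Finset.univ) (t := Finset.univ)
      (f := fun i j => (c i + θ i / 2 * z1 i * (c i + 1)) * (b j i * (1 + θ j / 2 * z2 j))), h,
    Finset.sum_comm (s := Finset.univ) (t := Finset.univ)
      (f := fun j i => (c i + θ i / 2 * z1 i * (c i + 1)) * (b j i * (1 + θ j / 2 * (0:Fin n → ℝ) j)))]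
  have h2 : ∑ j, ((θ j / 2) * (∑ i, (c i + θ i / 2 * z1 i * (c i + 1)) * b j i)
          + r j * (θ j / 2)) * z2 j
      = (∑ j, ((θ j / 2) * (∑ i, (c i + θ i / 2 * z1 i * (c i + 1)) * b j i)) * z2 j)
        + ∑ j, r j * (θ j / 2) * z2 j := by
    rw [← Finset.sum_add_distrib]
    exact Finset.sum_congr rfl fun j _ => by ring
  rw [h2]
  simp only [Pi.zero_apply, mul_zero, add_zero, mul_one, Finset.sum_const_zero]
  ring

/-- Lemma 1 of the paper (single camp, dependency setting): the bilinear objective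
`f(x^(1),x^(2)) = ∑ᵢ∑ⱼ (cᵢ + (θᵢ/2) xᵢ^(1) (cᵢ+1)) b_{ji} (1 + (θⱼ/2) xⱼ^(2))
  + ∑ⱼ rⱼ (θⱼ/2) xⱼ^(2)` has a maximizer over the budget simplex that invests on at most
one node per phase, and either exhausts the budget or invests nothing. -/
theorem dependency_single_camp_structure (n : ℕ) (b : Matrix (Fin n) (Fin n) ℝ)
    (c θ r : Fin n → ℝ) (kg : ℝ) (hkg : 0 ≤ kg) :
    ∃ x1 x2 : Fin n → ℝ,
      ((∀ i, 0 ≤ x1 i) ∧ (∀ i, 0 ≤ x2 i) ∧ (∑ i, (x1 i + x2 i)) ≤ kg) ∧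
      (∀ z1 z2 : Fin n → ℝ, (∀ i, 0 ≤ z1 i) → (∀ i, 0 ≤ z2 i) →
        (∑ i, (z1 i + z2 i)) ≤ kg →
        (∑ i, ∑ j, (c i + θ i / 2 * z1 i * (c i + 1)) * (b j i * (1 + θ j / 2 * z2 j)))
            + ∑ j, r j * (θ j / 2) * z2 j ≤
          (∑ i, ∑ j, (c i + θ i / 2 * x1 i * (c i + 1)) * (b j i * (1 + θ j / 2 * x2 j)))
            + ∑ j, r j * (θ j / 2) * x2 j) ∧
      (∀ i j, x1 i ≠ 0 → x1 j ≠ 0 → i = j) ∧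
      (∀ i j, x2 i ≠ 0 → x2 j ≠ 0 → i = j) ∧
      ((∑ i, (x1 i + x2 i)) = kg ∨ (x1 = 0 ∧ x2 = 0)) := by
  -- The feasible set is compact und the objective continuous: take a maximizer (y1, y2).
  set K : Set ((Fin n → ℝ) × (Fin n → ℝ)) :=
    {p | (∀ i, 0 ≤ p.1 i) ∧ (∀ i, 0 ≤ p.2 i) ∧ (∑ i, (p.1 i + p.2 i)) ≤ kg} with hKdef
  have hsum_cont : Continuous fun p : (Fin n → ℝ) × (Fin n → ℝ) => ∑ i, (p.1 i + p.2 i) :=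
    continuous_finset_sum _ fun i _ =>
      ((continuous_apply i).comp continuous_fst).add ((continuous_apply i).comp continuous_snd)
  have hclosed : IsClosed K := by
    have e : K = ({p : (Fin n → ℝ) × (Fin n → ℝ) | ∀ i, 0 ≤ p.1 i}
        ∩ {p | ∀ i, 0 ≤ p.2 i} ∩ {p | (∑ i, (p.1 i + p.2 i)) ≤ kg}) := by
      ext p; simp [hKdef, Set.mem_inter_iff, and_assoc]
    rw [e]
    refine IsClosed.inter (IsClosed.inter ?_ ?_) (isClosed_le hsum_cont continuous_const)
    · have : {p : (Fin n → ℝ) × (Fin n → ℝ) | ∀ i, 0 ≤ p.1 i} = ⋂ i, {p | 0 ≤ p.1 i} := by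
        ext p; simp
      rw [this]
      exact isClosed_iInter fun i =>
        isClosed_le continuous_const ((continuous_apply i).comp continuous_fst)
    · have : {p : (Fin n → ℝ) × (Fin n → ℝ) | ∀ i, 0 ≤ p.2 i} = ⋂ i, {p | 0 ≤ p.2 i} := by
        ext p; simp
      rw [this]
      exact isClosed_iInter fun i =>
        isClosed_le continuous_const ((continuous_apply i).comp continuous_snd)
  have hKcomp : IsCompact K := by
    refine IsCompact.of_isClosed_subset (isCompact_Icc
      (a := ((0 : Fin n → ℝ), (0 : Fin n → ℝ)))
      (b := ((fun _ => kg : Fin n → ℝ), (fun _ => kg : Fin n → ℝ)))) hclosed ?_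
    rintro ⟨p1, p2⟩ ⟨h1, h2, h3⟩
    have hterm : ∀ i, p1 i + p2 i ≤ kg := fun i =>
      le_trans (Finset.single_le_sum (f := fun i => p1 i + p2 i)
        (fun i _ => add_nonneg (h1 i) (h2 i)) (mem_univ i)) h3
    constructor
    · exact ⟨h1, h2⟩
    · constructor
      · intro i; exact le_trans (le_add_of_nonneg_right (h2 i)) (hterm i)
      · intro i; exact le_trans (le_add_of_nonneg_left (h1 i)) (hterm i)
  have hcont : Continuous fun p : (Fin n → ℝ) × (Fin n → ℝ) => obj n b c θ r p.1 p.2 := by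
    unfold obj
    fun_prop
  have hne : K.Nonempty := ⟨(0, 0), by simp [hKdef, hkg]⟩
  obtain ⟨p, hpK, hpmax0⟩ := hKcomp.exists_isMaxOn hne hcont.continuousOn
  have hpmax : ∀ q ∈ K, obj n b c θ r q.1 q.2 ≤ obj n b c θ r p.1 p.2 :=
    fun q hq => isMaxOn_iff.mp hpmax0 q hq
  obtain ⟨hy1, hy2, hysum⟩ := hpK
  set y1 := p.1
  set y2 := p.2
  have hysum' : (∑ i, y1 i) + (∑ i, y2 i) ≤ kg := by
    rw [← Finset.sum_add_distrib]; exact hysum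
  have hy1s : 0 ≤ ∑ i, y1 i := Finset.sum_nonneg fun i _ => hy1 i
  have hy2s : 0 ≤ ∑ i, y2 i := Finset.sum_nonneg fun i _ => hy2 i
  -- Phase 1: replace y1 by a one-node investment x1 (budget kg - ∑ y2).
  have hB1 : (0:ℝ) ≤ kg - ∑ i, y2 i := by linarith
  obtain ⟨x1, hx1nn, hx1sum, hx1supp, hx1disj, hx1max⟩ :=
    simplex_linear_max n (fun i => θ i / 2 * (c i + 1) * ∑ j, b j i * (1 + θ j / 2 * y2 j))
      (kg - ∑ i, y2 i) hB1
  have hstep1 : obj n b c θ r y1 y2 ≤ obj n b c θ r x1 y2 := by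
    rw [obj_lin1, obj_lin1 n b c θ r x1 y2]
    have := hx1max y1 hy1 (by linarith)
    linarith
  have hx1s : 0 ≤ ∑ i, x1 i := Finset.sum_nonneg fun i _ => hx1nn i
  -- Phase 2: replace y2 by a one-node investment x2 (budget kg - ∑ x1).
  have hB2 : (0:ℝ) ≤ kg - ∑ i, x1 i := by linarith
  obtain ⟨x2, hx2nn, hx2sum, hx2supp, hx2disj, hx2max⟩ :=
    simplex_linear_max n
      (fun j => (θ j / 2) * (∑ i, (c i + θ i / 2 * x1 i * (c i + 1)) * b j i) + r j * (θ j / 2))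
      (kg - ∑ i, x1 i) hB2
  have hstep2 : obj n b c θ r x1 y2 ≤ obj n b c θ r x1 x2 := by
    rw [obj_lin2, obj_lin2 n b c θ r x1 x2]
    have := hx2max y2 hy2 (by linarith)
    linarith
  have hglobal : ∀ z1 z2 : Fin n → ℝ, (∀ i, 0 ≤ z1 i) → (∀ i, 0 ≤ z2 i) →
      (∑ i, (z1 i + z2 i)) ≤ kg → obj n b c θ r z1 z2 ≤ obj n b c θ r x1 x2 := by
    intro z1 z2 hz1 hz2 hzsum
    have hzK : (z1, z2) ∈ K := ⟨hz1, hz2, hzsum⟩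
    exact le_trans (hpmax (z1, z2) hzK) (le_trans hstep1 hstep2)
  rcases hx2disj with hx2B | hx20
  · -- budget exhausted
    refine ⟨x1, x2, ⟨hx1nn, hx2nn, ?_⟩, ?_, hx1supp, hx2supp, Or.inl ?_⟩
    · rw [Finset.sum_add_distrib, hx2B]; linarith
    · intro z1 z2 hz1 hz2 hzsum
      have h1 := hglobal z1 z2 hz1 hz2 hzsum
      unfold obj at h1
      exact h1
    · rw [Finset.sum_add_distrib, hx2B]; ring
  · -- x2 = 0: re-optimize phase 1 over the full budget kg.
    obtain ⟨w1, hw1nn, hw1sum, hw1supp, hw1disj, hw1max⟩ :=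
      simplex_linear_max n
        (fun i => θ i / 2 * (c i + 1) * ∑ j, b j i * (1 + θ j / 2 * (0:Fin n → ℝ) j)) kg hkg
    have hstep3 : obj n b c θ r x1 (0:Fin n → ℝ) ≤ obj n b c θ r w1 (0:Fin n → ℝ) := by
      rw [obj_lin1, obj_lin1 n b c θ r w1 0]
      have := hw1max x1 hx1nn (by linarith)
      linarith
    refine ⟨w1, 0, ⟨hw1nn, fun i => le_rfl, ?_⟩, ?_, hw1supp, by simp, ?_⟩
    · simpa using hw1sum
    · intro z1 z2 hz1 hz2 hzsum
      have h1 : obj n b c θ r z1 z2 ≤ obj n b c θ r x1 x2 := hglobal z1 z2 hz1 hz2 hzsum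
      rw [hx20] at h1
      have h2 := le_trans h1 hstep3
      unfold obj at h2
      exact h2
    · rcases hw1disj with hw | hw
      · left; simpa using hw
      · right; exact ⟨hw, rfl⟩
end

section
/- Let w be a real n×n matrix with I − w invertible, Δ = (I − w)^{-1}, r = Δᵀ𝟙, s = Δᵀ(r ∘ w⁰), b_{ji} = r_j w⁰_j Δ_{ji}, c_i = w⁰_i v⁰_i. Define phase-dependent weights w_{g,i}^{(p)} = (θ_i/2)(1 + w⁰_i v_i^{(p−1)}) and w_{b,i}^{(p)} = (θ_i/2)(1 − w⁰_i v_i^{(p−1)}), with v^(0) = v⁰, v^(p) = Δ(w⁰ ∘ v^{(p−1)} + w_g^{(p)} ∘ x^(p) − w_b^{(p)} ∘ y^(p)) for p = 1, 2. Then ∑_i v_i^(2) = ∑_i ∑_j c_i b_{ji} + ∑_j x_j^(2) (θ_j/2)(∑_i c_i b_{ji} + r_j) + ∑_j y_j^(2) (θ_j/2)(∑_i c_i b_{ji} − r_j) + ∑_i x_i^(1) (θ_i/2)(1 + c_i)( s_i + ∑_j x_j^(2) (θ_j/2) b_{ji} + ∑_j y_j^(2) (θ_j/2) b_{ji} ) −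 ∑_i y_i^(1) (θ_i/2)(1 − c_i)( s_i + ∑_j x_j^(2) (θ_j/2) b_{ji} + ∑_j y_j^(2) (θ_j/2) b_{ji} ). -/
open Matrix BigOperators Finset

/-- Two-camp two-phase objective in the dependency setting: with `Δ = (I − w)⁻¹`,
`r = Δᵀ𝟙`, `s = Δᵀ(r ∘ w⁰)`, `b_{ji} = r_j w⁰_j Δ_{ji}`, `c_i = w⁰_i v⁰_i`,
phase-dependent weights `w_{g,i}^{(p)} = (θᵢ/2)(1 + w⁰ᵢ vᵢ^{(p−1)})`,
`w_{b,i}^{(p)} = (θᵢ/2)(1 − w⁰ᵢ vᵢ^{(p−1)})`, and phase opinions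
`v^(p) = Δ(w⁰ ∘ v^{(p−1)} + w_g^{(p)} ∘ x^(p) − w_b^{(p)} ∘ y^(p))` for `p = 1, 2`,
the stated expansion of `∑ᵢ vᵢ^(2)` holds. -/
theorem dependency_two_camp_objective (n : ℕ) (w Δ : Matrix (Fin n) (Fin n) ℝ)
    (hinv : IsUnit (1 - w)) (hΔ : Δ = (1 - w)⁻¹)
    (w0 θ v0 x1 x2 y1 y2 : Fin n → ℝ)
    (r : Fin n → ℝ) (hr : ∀ i, r i = ∑ j, Δ j i)
    (s : Fin n → ℝ) (hs : ∀ i, s i = ∑ j, r j * w0 j * Δ j i)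
    (b : Matrix (Fin n) (Fin n) ℝ) (hb : ∀ j i, b j i = r j * w0 j * Δ j i)
    (c : Fin n → ℝ) (hc : ∀ i, c i = w0 i * v0 i)
    (v1 v2 : Fin n → ℝ)
    (hv1 : v1 = Δ.mulVec (fun i => w0 i * v0 i
      + (θ i / 2 * (1 + w0 i * v0 i)) * x1 i - (θ i / 2 * (1 - w0 i * v0 i)) * y1 i))
    (hv2 : v2 = Δ.mulVec (fun i => w0 i * v1 i
      + (θ i / 2 * (1 + w0 i * v1 i)) * x2 i - (θ i / 2 * (1 - w0 i * v1 i)) * y2 i)) :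
    ∑ i, v2 i =
      (∑ i, ∑ j, c i * b j i)
        + (∑ j, x2 j * (θ j / 2) * ((∑ i, c i * b j i) + r j))
        + (∑ j, y2 j * (θ j / 2) * ((∑ i, c i * b j i) - r j))
        + (∑ i, x1 i * (θ i / 2) * (1 + c i) *
            (s i + (∑ j, x2 j * (θ j / 2) * b j i) + (∑ j, y2 j * (θ j / 2) * b j i)))
        - (∑ i, y1 i * (θ i / 2) * (1 - c i) *
            (s i + (∑ j, x2 j * (θ j / 2) * b j i) + (∑ j, y2 j * (θ j / 2) * b j i))) := by
  -- abbreviations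
  set u1 : Fin n → ℝ := fun k => w0 k * v0 k
      + (θ k / 2 * (1 + w0 k * v0 k)) * x1 k - (θ k / 2 * (1 - w0 k * v0 k)) * y1 k with hu1
  set T : Fin n → ℝ := fun k =>
      s k + (∑ j, x2 j * (θ j / 2) * b j k) + (∑ j, y2 j * (θ j / 2) * b j k) with hT
  -- column sum lemma
  have key : ∀ u : Fin n → ℝ, ∑ i, Δ.mulVec u i = ∑ j, r j * u j := by
    intro u
    simp only [Matrix.mulVec, dotProduct]
    rw [Finset.sum_comm]
    exact Finset.sum_congr rfl fun j _ => by rw [hr, Finset.sum_mul]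
  have hv1k : ∀ j, v1 j = ∑ k, Δ j k * u1 k := by
    intro j; rw [hv1]; simp only [Matrix.mulVec, dotProduct, hu1]
  -- s as column sum of b
  have hsb : ∀ k, s k = ∑ j, b j k := by
    intro k; rw [hs]; exact Finset.sum_congr rfl fun j _ => (hb j k).symm
  -- LHS computation
  have hrwv : ∀ j, r j * w0 j * v1 j = ∑ k, b j k * u1 k := by
    intro j
    rw [hv1k j, Finset.mul_sum]
    exact Finset.sum_congr rfl fun k _ => by rw [hb]; ring
  have lhs_eq : ∑ i, v2 i
      = (∑ k, u1 k * T k) + (∑ j, x2 j * (θ j / 2) * r j) - (∑ j, y2 j * (θ j / 2) * r j) := by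
    rw [hv2, key]
    have expand : ∀ j, r j * (w0 j * v1 j + (θ j / 2 * (1 + w0 j * v1 j)) * x2 j
        - (θ j / 2 * (1 - w0 j * v1 j)) * y2 j)
        = (r j * w0 j * v1 j) * (1 + x2 j * (θ j / 2) + y2 j * (θ j / 2))
          + x2 j * (θ j / 2) * r j - y2 j * (θ j / 2) * r j := fun j => by ring
    calc ∑ j, r j * (w0 j * v1 j + (θ j / 2 * (1 + w0 j * v1 j)) * x2 j
            - (θ j / 2 * (1 - w0 j * v1 j)) * y2 j)
        = ∑ j, ((∑ k, b j k * u1 k * (1 + x2 j * (θ j / 2) + y2 j * (θ j / 2)))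
            + x2 j * (θ j / 2) * r j - y2 j * (θ j / 2) * r j) := by
          refine Finset.sum_congr rfl fun j _ => ?_
          rw [expand j, hrwv j, Finset.sum_mul]
      _ = (∑ j, ∑ k, b j k * u1 k * (1 + x2 j * (θ j / 2) + y2 j * (θ j / 2)))
            + (∑ j, x2 j * (θ j / 2) * r j) - (∑ j, y2 j * (θ j / 2) * r j) := by
          rw [Finset.sum_sub_distrib, Finset.sum_add_distrib]
      _ = (∑ k, u1 k * T k) + (∑ j, x2 j * (θ j / 2) * r j)
            - (∑ j, y2 j * (θ j / 2) * r j) := by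
          congr 2
          rw [Finset.sum_comm]
          refine Finset.sum_congr rfl fun k _ => ?_
          rw [hT]
          simp only
          rw [hsb k, mul_add, mul_add, Finset.mul_sum, Finset.mul_sum, Finset.mul_sum,
            ← Finset.sum_add_distrib, ← Finset.sum_add_distrib]
          exact Finset.sum_congr rfl fun j _ => by ring
  -- split u1 * T
  have split_u1 : (∑ k, u1 k * T k) = (∑ k, c k * T k)
      + (∑ k, x1 k * (θ k / 2) * (1 + c k) * T k)
      - (∑ k, y1 k * (θ k / 2) * (1 - c k) * T k) := by
    have h : ∀ k, u1 k * T k = c k * T k + x1 k * (θ k / 2) * (1 + c k) * T k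
        - y1 k * (θ k / 2) * (1 - c k) * T k := by
      intro k
      rw [hc k]
      simp only [hu1]
      ring
    rw [Finset.sum_congr rfl fun k _ => h k, Finset.sum_sub_distrib, Finset.sum_add_distrib]
  -- expand c * T
  have cT : (∑ k, c k * T k) = (∑ k, c k * s k)
      + (∑ i, c i * ∑ j, x2 j * (θ j / 2) * b j i)
      + (∑ i, c i * ∑ j, y2 j * (θ j / 2) * b j i) := by
    rw [← Finset.sum_add_distrib, ← Finset.sum_add_distrib]
    refine Finset.sum_congr rfl fun k _ => ?_
    simp only [hT]
    ring
  -- RHS pieces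
  have c_term : (∑ i, ∑ j, c i * b j i) = ∑ i, c i * s i := by
    refine Finset.sum_congr rfl fun i _ => ?_
    rw [hsb i, Finset.mul_sum]
  have x2split : (∑ j, x2 j * (θ j / 2) * ((∑ i, c i * b j i) + r j))
      = (∑ i, c i * ∑ j, x2 j * (θ j / 2) * b j i)
        + (∑ j, x2 j * (θ j / 2) * r j) := by
    calc (∑ j, x2 j * (θ j / 2) * ((∑ i, c i * b j i) + r j))
        = ∑ j, ((∑ i, x2 j * (θ j / 2) * (c i * b j i)) + x2 j * (θ j / 2) * r j) := by
          refine Finset.sum_congr rfl fun j _ => ?_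
          rw [mul_add, Finset.mul_sum]
      _ = (∑ j, ∑ i, x2 j * (θ j / 2) * (c i * b j i))
            + (∑ j, x2 j * (θ j / 2) * r j) := Finset.sum_add_distrib
      _ = (∑ i, c i * ∑ j, x2 j * (θ j / 2) * b j i)
            + (∑ j, x2 j * (θ j / 2) * r j) := by
          rw [Finset.sum_comm]
          congr 1
          refine Finset.sum_congr rfl fun i _ => ?_
          rw [Finset.mul_sum]
          exact Finset.sum_congr rfl fun j _ => by ring
  have y2split : (∑ j, y2 j * (θ j / 2) * ((∑ i, c i * b j i) - r j))
      = (∑ i, c i * ∑ j, y2 j * (θ j / 2) * b j i)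
        - (∑ j, y2 j * (θ j / 2) * r j) := by
    calc (∑ j, y2 j * (θ j / 2) * ((∑ i, c i * b j i) - r j))
        = ∑ j, ((∑ i, y2 j * (θ j / 2) * (c i * b j i)) - y2 j * (θ j / 2) * r j) := by
          refine Finset.sum_congr rfl fun j _ => ?_
          rw [mul_sub, Finset.mul_sum]
      _ = (∑ j, ∑ i, y2 j * (θ j / 2) * (c i * b j i))
            - (∑ j, y2 j * (θ j / 2) * r j) := Finset.sum_sub_distrib _ _
      _ = (∑ i, c i * ∑ j, y2 j * (θ j / 2) * b j i)
            - (∑ j, y2 j * (θ j / 2) * r j) := by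
          rw [Finset.sum_comm]
          congr 1
          refine Finset.sum_congr rfl fun i _ => ?_
          rw [Finset.mul_sum]
          exact Finset.sum_congr rfl fun j _ => by ring
  rw [lhs_eq, split_u1, cT, c_term, x2split, y2split]
  simp only [hT]
  ring
end

section
/- Fix nodes α, β, γ, δ, reals θ_α, θ_β, θ_γ, θ_δ ≥ 0, b_{βα}, b_{δα}, b_{βγ}, b_{δγ} ≥ 0, c_α, c_γ ∈ [−1, 1], budgets k_g, k_b ≥ 0, and arbitrary reals s_α, s_γ, A_β, A_δ. Define h(a, e) = C + (k_g − a)(θ_β/2) A_β + (k_b − e)(θ_δ/2) A_δ + a (θ_α/2)(1 + c_α)( s_α + (k_g − a)(θ_β/2) b_{βα} + (k_b − e)(θ_δ/2) b_{δα} ) − e (θ_γ/2)(1 − c_γ)( s_γ + (k_g − a)(θ_β/2) b_{βγ} + (k_b − e)(θ_δ/2) b_{δγ} ) for (a, e) ∈ [0, k_g] × [0, k_b], where C is a constant. Then for each fixed e, the function a ↦ h(a, e) is concave on [0, k_g], and for each fixed a, the function e ↦ h(a, e) is convex on [0, k_b]. -/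
/-- Concave-convex structure of the two-camp budget-split objective: for nonnegative
`θ`'s and `b`'s and `c_α, c_γ ∈ [−1, 1]`, the function `h(a, e)` is concave in the good
camp's first-phase budget `a ∈ [0, k_g]` for each fixed `e ∈ [0, k_b]`, and convex in the
bad camp's first-phase budget `e ∈ [0, k_b]` for each fixed `a ∈ [0, k_g]`. -/
theorem budget_split_concave_convex
    (θα θβ θγ θδ bβα bδα bβγ bδγ cα cγ kg kb sα sγ Aβ Aδ C : ℝ)
    (hθα : 0 ≤ θα) (hθβ : 0 ≤ θβ) (hθγ : 0 ≤ θγ) (hθδ : 0 ≤ θδ)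
    (hbβα : 0 ≤ bβα) (hbδα : 0 ≤ bδα) (hbβγ : 0 ≤ bβγ) (hbδγ : 0 ≤ bδγ)
    (hcα : cα ∈ Set.Icc (-1 : ℝ) 1) (hcγ : cγ ∈ Set.Icc (-1 : ℝ) 1)
    (hkg : 0 ≤ kg) (hkb : 0 ≤ kb) :
    (∀ e ∈ Set.Icc (0 : ℝ) kb,
      ConcaveOn ℝ (Set.Icc (0 : ℝ) kg) (fun a =>
        C + (kg - a) * (θβ / 2) * Aβ + (kb - e) * (θδ / 2) * Aδ
          + a * (θα / 2) * (1 + cα) *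
              (sα + (kg - a) * (θβ / 2) * bβα + (kb - e) * (θδ / 2) * bδα)
          - e * (θγ / 2) * (1 - cγ) *
              (sγ + (kg - a) * (θβ / 2) * bβγ + (kb - e) * (θδ / 2) * bδγ))) ∧
    (∀ a ∈ Set.Icc (0 : ℝ) kg,
      ConvexOn ℝ (Set.Icc (0 : ℝ) kb) (fun e =>
        C + (kg - a) * (θβ / 2) * Aβ + (kb - e) * (θδ / 2) * Aδ
          + a * (θα / 2) * (1 + cα) *
              (sα + (kg - a) * (θβ / 2) * bβα + (kb - e) * (θδ / 2) * bδα)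
          - e * (θγ / 2) * (1 - cγ) *
              (sγ + (kg - a) * (θβ / 2) * bβγ + (kb - e) * (θδ / 2) * bδγ))) := by
  obtain ⟨hcα1, _⟩ := hcα
  obtain ⟨_, hcγ1⟩ := hcγ
  have h1 : (0:ℝ) ≤ 1 + cα := by linarith
  have h2 : (0:ℝ) ≤ 1 - cγ := by linarith
  constructor
  · intro e _
    refine ⟨convex_Icc _ _, ?_⟩
    intro x _ y _ a b ha hb hab
    simp only [smul_eq_mul]
    have key : 0 ≤ (θα / 2) * (1 + cα) * ((θβ / 2) * bβα) * (a * b * (x - y) ^ 2) := by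
      have := mul_nonneg (mul_nonneg ha hb) (sq_nonneg (x - y))
      have := mul_nonneg (mul_nonneg (by linarith : (0:ℝ) ≤ θα / 2) h1)
        (mul_nonneg (by linarith : (0:ℝ) ≤ θβ / 2) hbβα)
      positivity
    have hb' : b = 1 - a := by linarith
    subst hb'
    nlinarith [key]
  · intro a _
    refine ⟨convex_Icc _ _, ?_⟩
    intro x _ y _ p q hp hq hpq
    simp only [smul_eq_mul]
    have key : 0 ≤ (θγ / 2) * (1 - cγ) * ((θδ / 2) * bδγ) * (p * q * (x - y) ^ 2) := by
      have := mul_nonneg (mul_nonneg hp hq) (sq_nonneg (x - y))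
      have := mul_nonneg (mul_nonneg (by linarith : (0:ℝ) ≤ θγ / 2) h2)
        (mul_nonneg (by linarith : (0:ℝ) ≤ θδ / 2) hbδγ)
      positivity
    have hq' : q = 1 - p := by linarith
    subst hq'
    nlinarith [key]
end

section
/- Let w be a real n×n matrix with I − w invertible, Δ = (I − w)^{-1}, r = Δᵀ𝟙, s = Δᵀ(r ∘ w⁰), and let δ₁, δ₂ ∈ ℝ. With v^(1) = Δ(w⁰ ∘ v⁰ + w_g ∘ x^(1) − w_b ∘ y^(1)) and v^(2) = Δ(w⁰ ∘ v^(1) + w_g ∘ x^(2) − w_b ∘ y^(2)), the weighted two-election objective satisfies ∑_i (δ₁ v_i^(1) + δ₂ v_i^(2)) = ∑_i (δ₁ r_i + δ₂ s_i) w⁰_i v⁰_i + ∑_i (δ₁ r_i + δ₂ s_i)(w_{g,i} x_i^(1) − w_{b,i} y_i^(1)) + δ₂ ∑_i r_i (w_{g,i} x_i^(2) − w_{b,i} y_i^(2)). -/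
open Matrix BigOperators Finset

/-- Multiple-elections objective: with `Δ = (I − w)⁻¹`, `r = Δᵀ𝟙`, `s = Δᵀ(r ∘ w⁰)`, and
two-phase opinions `v^(1) = Δ(w⁰ ∘ v⁰ + w_g ∘ x^(1) − w_b ∘ y^(1))`,
`v^(2) = Δ(w⁰ ∘ v^(1) + w_g ∘ x^(2) − w_b ∘ y^(2))`, the weighted objective satisfies
`∑ᵢ (δ₁ vᵢ^(1) + δ₂ vᵢ^(2)) = ∑ᵢ (δ₁ rᵢ + δ₂ sᵢ) w⁰ᵢ v⁰ᵢ
  + ∑ᵢ (δ₁ rᵢ + δ₂ sᵢ)(w_{g,i} xᵢ^(1) − w_{b,i} yᵢ^(1))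
  + δ₂ ∑ᵢ rᵢ (w_{g,i} xᵢ^(2) − w_{b,i} yᵢ^(2))`. -/
theorem multiple_elections_objective (n : ℕ) (w Δ : Matrix (Fin n) (Fin n) ℝ)
    (hinv : IsUnit (1 - w)) (hΔ : Δ = (1 - w)⁻¹)
    (w0 wg wb v0 x1 x2 y1 y2 : Fin n → ℝ) (δ1 δ2 : ℝ)
    (r s : Fin n → ℝ)
    (hr : ∀ i, r i = ∑ j, Δ j i)
    (hs : ∀ i, s i = ∑ j, r j * w0 j * Δ j i)
    (v1 v2 : Fin n → ℝ)
    (hv1 : v1 = Δ.mulVec (fun i => w0 i * v0 i + wg i * x1 i - wb i * y1 i))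
    (hv2 : v2 = Δ.mulVec (fun i => w0 i * v1 i + wg i * x2 i - wb i * y2 i)) :
    ∑ i, (δ1 * v1 i + δ2 * v2 i) =
      ∑ i, (δ1 * r i + δ2 * s i) * w0 i * v0 i
        + ∑ i, (δ1 * r i + δ2 * s i) * (wg i * x1 i - wb i * y1 i)
        + δ2 * ∑ i, r i * (wg i * x2 i - wb i * y2 i) := by
  have key : ∀ (c f : Fin n → ℝ), ∑ i, c i * Δ.mulVec f i = ∑ j, (∑ i, c i * Δ i j) * f j := by
    intro c f
    simp only [Matrix.mulVec, dotProduct, Finset.mul_sum, Finset.sum_mul]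
    rw [Finset.sum_comm]
    apply Finset.sum_congr rfl; intro j _
    apply Finset.sum_congr rfl; intro i _
    ring
  set f1 : Fin n → ℝ := fun i => w0 i * v0 i + wg i * x1 i - wb i * y1 i with hf1
  have h1 : ∑ i, v1 i = ∑ j, r j * f1 j := by
    have := key (fun _ => 1) f1
    simp only [one_mul] at this
    rw [hv1, this]
    apply Finset.sum_congr rfl; intro j _
    rw [hr]
  have h2 : ∑ i, r i * w0 i * v1 i = ∑ j, s j * f1 j := by
    have := key (fun i => r i * w0 i) f1
    rw [hv1]
    rw [show (∑ i, r i * w0 i * Δ.mulVec f1 i) = ∑ j, (∑ i, r i * w0 i * Δ i j) * f1 j from this]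
    apply Finset.sum_congr rfl; intro j _
    rw [hs]
  have h3 : ∑ i, v2 i = ∑ j, s j * f1 j + ∑ j, r j * (wg j * x2 j - wb j * y2 j) := by
    have := key (fun _ => 1) (fun i => w0 i * v1 i + wg i * x2 i - wb i * y2 i)
    simp only [one_mul] at this
    rw [hv2, this]
    have : ∀ j, (∑ i, Δ i j) * (w0 j * v1 j + wg j * x2 j - wb j * y2 j)
        = r j * w0 j * v1 j + r j * (wg j * x2 j - wb j * y2 j) := by
      intro j; rw [hr]; ring
    simp only [this]
    rw [Finset.sum_add_distrib, h2]
  have expand : ∑ i, (δ1 * v1 i + δ2 * v2 i) = δ1 * ∑ i, v1 i + δ2 * ∑ i, v2 i := by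
    rw [Finset.sum_add_distrib, Finset.mul_sum, Finset.mul_sum]
  rw [expand, h1, h3]
  rw [mul_add, Finset.mul_sum, Finset.mul_sum, Finset.mul_sum]
  rw [← Finset.sum_add_distrib, ← Finset.sum_add_distrib, add_assoc, ← Finset.sum_add_distrib, ← Finset.sum_add_distrib]
  apply Finset.sum_congr rfl; intro i _
  simp only [hf1]; ring
end
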